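/- Let G = 𝔽_p[t] (the additive group of polynomials over a prime field 𝔽_p) and h ≥ 2. Then the maximum number of exceptional elements in a basis of order at most h of G equals ⌊(h−1)/(p−1)⌋. -/

import Mathlib

open Pointwise

/-- `itSum A n` is the `n`-fold sumset of `A` (sums of exactly `n` elements of `A`). -/
def itSum {G : Type*} [AddCommGroup G] (A : Set G) : ℕ → Set G
  | 0 => {0}
  | n + 1 => itSum A n + A

/-- `SimEq A B` means the symmetric difference of `A` and `B` is finite. -/
def SimEq {G : Type*} [AddCommGroup G] (A B : Set G) : Prop :=
  (symmDiff A B).Finite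

section Basic
variable {G : Type*} [AddCommGroup G] {A B : Set G}

lemma itSum_zero (A : Set G) : itSum A 0 = {0} := rfl
lemma itSum_succ (A : Set G) (n : ℕ) : itSum A (n+1) = itSum A n + A := rfl

lemma itSum_mono (hAB : A ⊆ B) : ∀ n, itSum A n ⊆ itSum B n
  | 0 => subset_rfl
  | n + 1 => Set.add_subset_add (itSum_mono hAB n) hAB

lemma itSum_add (A : Set G) (m : ℕ) : ∀ n, itSum A (m + n) = itSum A m + itSum A n
  | 0 => by simp [itSum_zero, Set.add_singleton]
  | n + 1 => by
    rw [← Nat.add_assoc, itSum_succ, itSum_succ, itSum_add A m n, add_assoc]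

lemma add_mem_itSum {m n : ℕ} {x y : G} (hx : x ∈ itSum A m) (hy : y ∈ itSum A n) :
    x + y ∈ itSum A (m + n) := by
  rw [itSum_add]; exact Set.add_mem_add hx hy

lemma itSum_le_of_zero_mem (h0 : 0 ∈ A) {m n : ℕ} (hmn : m ≤ n) :
    itSum A m ⊆ itSum A n := by
  induction n with
  | zero => simp [Nat.le_zero.mp hmn]
  | succ n ih =>
    rcases Nat.lt_or_ge m (n+1) with hlt | hge
    · intro x hx
      have : x + 0 ∈ itSum A (n + 1) := Set.add_mem_add (ih (Nat.lt_succ_iff.mp hlt) hx) h0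
      simpa using this
    · have : m = n + 1 := le_antisymm hmn hge
      subst this; exact subset_rfl

lemma nsmul_mem_itSum {a : G} (ha : a ∈ A) : ∀ k : ℕ, k • a ∈ itSum A k
  | 0 => by simp [itSum_zero]
  | k + 1 => by
    have := add_mem_itSum (nsmul_mem_itSum ha k)
      (show a ∈ itSum A 1 by simpa [itSum_succ, itSum_zero, Set.singleton_add] using ha)
    simpa [succ_nsmul] using this

lemma sum_mem_itSum {ι : Type*} (s : Finset ι) (f : ι → G) (c : ι → ℕ)
    (hf : ∀ i ∈ s, f i ∈ itSum A (c i)) :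
    (∑ i ∈ s, f i) ∈ itSum A (∑ i ∈ s, c i) := by
  classical
  induction s using Finset.induction_on with
  | empty => simp [itSum_zero]
  | insert _ _ hx ih =>
    rename_i a s
    rw [Finset.sum_insert hx, Finset.sum_insert hx]
    exact add_mem_itSum (hf a (Finset.mem_insert_self a s))
      (ih fun i hi => hf i (Finset.mem_insert_of_mem hi))

lemma itSum_subset_addSubgroup (H : AddSubgroup G) (hA : A ⊆ H) : ∀ k, itSum A k ⊆ H
  | 0 => by simpa [itSum_zero] using H.zero_mem
  | k + 1 => by
    rintro x ⟨y, hy, a, ha, rfl⟩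
    exact H.add_mem (itSum_subset_addSubgroup H hA k hy) (hA ha)

lemma itSum_finite (hA : A.Finite) : ∀ k, (itSum A k).Finite
  | 0 => Set.finite_singleton 0
  | k + 1 => (itSum_finite hA k).add hA

lemma itSum_singleton_add (v : G) (A : Set G) :
    ∀ k, itSum ({v} + A) k = {k • v} + itSum A k
  | 0 => by simp [itSum_zero]
  | k + 1 => by
    rw [itSum_succ, itSum_singleton_add v A k, itSum_succ, succ_nsmul,
      show ({k • v + v} : Set G) = {k • v} + {v} from (Set.singleton_add_singleton ..).symm]
    rw [add_assoc, add_assoc, add_comm (itSum A k) ({v} + A), add_assoc, add_comm A (itSum A k)]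

lemma singleton_add_diff (v a : G) (A : Set G) :
    {v} + (A \ {a}) = ({v} + A) \ {v + a} := by
  simp only [Set.singleton_add]
  rw [Set.image_diff (add_right_injective v), Set.image_singleton]

lemma simEq_univ_iff {X : Set G} : SimEq X Set.univ ↔ Xᶜ.Finite := by
  unfold SimEq
  rw [show (Set.univ : Set G) = ⊤ from rfl, symmDiff_top]
  exact Iff.rfl

lemma simEq_singleton_add_univ_iff (v : G) (X : Set G) :
    SimEq ({v} + X) Set.univ ↔ SimEq X Set.univ := by
  rw [simEq_univ_iff, simEq_univ_iff]
  have : ({v} + X)ᶜ = (v + ·) '' Xᶜ := by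
    ext z
    simp only [Set.singleton_add, Set.mem_compl_iff, Set.mem_image]
    constructor
    · intro hz
      exact ⟨z - v, fun hc => hz ⟨z - v, hc, by abel⟩, by abel⟩
    · rintro ⟨x, hx, rfl⟩ ⟨y, hy, hvy⟩
      exact hx (by rwa [show x = y from by exact add_left_cancel hvy.symm])
  rw [this, Set.finite_image_iff (Set.injOn_of_injective (add_right_injective v))]

lemma simEq_univ_mono {X Y : Set G} (hXY : X ⊆ Y) (hX : SimEq X Set.univ) :
    SimEq Y Set.univ := by
  rw [simEq_univ_iff] at *
  exact hX.subset (Set.compl_subset_compl.mpr hXY)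

lemma basis_infinite [Infinite G] {h : ℕ} (hbasis : SimEq (itSum A h) Set.univ) : A.Infinite := by
  by_contra hni
  have hfin : A.Finite := Set.not_infinite.mp hni
  have h1 : (itSum A h).Finite := itSum_finite hfin h
  have h2 : (itSum A h)ᶜ.Finite := simEq_univ_iff.mp hbasis
  have : (Set.univ : Set G).Finite := by
    simpa [Set.union_compl_self] using h1.union h2
  exact Set.infinite_univ (by simpa using this)

end Basic

section UB
variable {p : ℕ} [Fact p.Prime] {G : Type*} [AddCommGroup G] [Module (ZMod p) G]

lemma itSum_subset_submodule (H : Submodule (ZMod p) G) {A : Set G} (hA : A ⊆ (H : Set G)) :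
    ∀ k, itSum A k ⊆ (H : Set G) :=
  itSum_subset_addSubgroup H.toAddSubgroup hA

lemma exceptional_not_mem_span {A : Set G} {a : G} {h : ℕ} (h1 : 1 ≤ h)
    (hbasis : SimEq (itSum A h) Set.univ) (h0 : (0:G) ∈ A \ {a})
    (hexc : ∀ k, 1 ≤ k → ¬ SimEq (itSum (A \ {a}) k) Set.univ) :
    a ∉ Submodule.span (ZMod p) (A \ {a}) := by
  haveI : NeZero p := ⟨(Fact.out (p := p.Prime)).ne_zero⟩
  intro hmem
  classical
  obtain ⟨c, hsupp, hsum⟩ := Submodule.mem_span_set.mp hmem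
  set m : ℕ := ∑ b ∈ c.support, (c b).val with hm
  have haG : a ∈ itSum (A \ {a}) m := by
    have hterm : ∀ b ∈ c.support, (c b) • b ∈ itSum (A \ {a}) ((c b).val) := by
      intro b hb
      have hb' : b ∈ A \ {a} := hsupp hb
      have hcast : ((c b).val : ZMod p) • b = (c b) • b := by
        rw [ZMod.natCast_val, ZMod.cast_id]
      rw [← hcast, Nat.cast_smul_eq_nsmul]
      exact nsmul_mem_itSum hb' _
    have := sum_mem_itSum c.support (fun b => c b • b) (fun b => (c b).val) hterm
    rwa [show (∑ b ∈ c.support, c b • b) = a by rw [← hsum, Finsupp.sum]] at this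
  have hstep : ∀ b ∈ A, b ∈ itSum (A \ {a}) (m + 1) := by
    intro b hb
    by_cases hba : b = a
    · subst hba
      exact itSum_le_of_zero_mem h0 (Nat.le_succ m) haG
    · have : b ∈ itSum (A \ {a}) 1 := by
        simpa [itSum_succ, itSum_zero, Set.singleton_add] using (⟨hb, hba⟩ : b ∈ A \ {a})
      exact itSum_le_of_zero_mem h0 (by omega) this
  have hsub : ∀ k, itSum A k ⊆ itSum (A \ {a}) (k * (m + 1)) := by
    intro k
    induction k with
    | zero => simp [itSum_zero]
    | succ k ih =>
      rintro x ⟨y, hy, b, hb, rfl⟩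
      have := add_mem_itSum (ih hy) (hstep b hb)
      rwa [show k * (m+1) + (m+1) = (k+1)*(m+1) by ring] at this
  exact hexc (h * (m+1)) (Nat.one_le_iff_ne_zero.mpr (by positivity)) (simEq_univ_mono (hsub h) hbasis)

lemma indep_of_not_mem_span {A : Set G} {n : ℕ} {a : Fin n → G} (inj : Function.Injective a)
    (hspan : ∀ i, a i ∉ Submodule.span (ZMod p) (A \ {a i}))
    (haA : ∀ i, a i ∈ A) {c : Fin n → ZMod p}
    (hc : (∑ i, c i • a i) ∈ Submodule.span (ZMod p) (A \ Set.range a)) :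
    ∀ i, c i = 0 := by
  intro i
  by_contra hne
  apply hspan i
  have h1 : (∑ k, c k • a k) ∈ Submodule.span (ZMod p) (A \ {a i}) :=
    Submodule.span_mono (Set.diff_subset_diff_right
      (by simp [Set.singleton_subset_iff])) hc
  have h2 : (∑ k ∈ Finset.univ.erase i, c k • a k) ∈ Submodule.span (ZMod p) (A \ {a i}) := by
    apply Submodule.sum_mem
    intro k hk
    apply Submodule.smul_mem
    apply Submodule.subset_span
    exact ⟨haA k, fun hkeq => (Finset.mem_erase.mp hk).1
      (inj (by simpa using hkeq))⟩
  have h3 : c i • a i ∈ Submodule.span (ZMod p) (A \ {a i}) := by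
    have heq : c i • a i = (∑ k, c k • a k) - ∑ k ∈ Finset.univ.erase i, c k • a k := by
      rw [← Finset.add_sum_erase _ _ (Finset.mem_univ i)]; abel
    rw [heq]; exact Submodule.sub_mem _ h1 h2
  have := Submodule.smul_mem _ (c i)⁻¹ h3
  rwa [inv_smul_smul₀ hne] at this

lemma itSum_cover {A : Set G} {n : ℕ} (a : Fin n → G) :
    ∀ k, ∀ x ∈ itSum A k, ∃ j : Fin n → ℕ, (∑ i, j i) ≤ k ∧
      x - ∑ i, (j i) • a i ∈ itSum (A \ Set.range a) (k - ∑ i, j i) := by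
  intro k
  induction k with
  | zero =>
    intro x hx
    refine ⟨0, by simp, ?_⟩
    simp only [itSum_zero, Set.mem_singleton_iff] at hx
    simp [hx, itSum_zero]
  | succ k ih =>
    rintro x ⟨y, hy, b, hb, rfl⟩
    obtain ⟨j, hjle, hmem⟩ := ih y hy
    by_cases hbr : b ∈ Set.range a
    · obtain ⟨i₀, rfl⟩ := hbr
      refine ⟨Function.update j i₀ (j i₀ + 1), ?_, ?_⟩
      · have hupd : (∑ i, Function.update j i₀ (j i₀ + 1) i) = (∑ i, j i) + 1 := by
          have hptw : ∀ i, Function.update j i₀ (j i₀ + 1) i = j i + (if i = i₀ then 1 else 0) := by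
            intro i
            rcases eq_or_ne i i₀ with rfl | hne
            · simp
            · simp [Function.update_apply, hne]
          simp only [hptw, Finset.sum_add_distrib, Finset.sum_ite_eq' Finset.univ i₀]
          simp
        rw [hupd]; omega
      · have hupd : (∑ i, Function.update j i₀ (j i₀ + 1) i) = (∑ i, j i) + 1 := by
          have hptw : ∀ i, Function.update j i₀ (j i₀ + 1) i = j i + (if i = i₀ then 1 else 0) := by
            intro i
            rcases eq_or_ne i i₀ with rfl | hne
            · simp
            · simp [Function.update_apply, hne]
          simp only [hptw, Finset.sum_add_distrib, Finset.sum_ite_eq' Finset.univ i₀]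
          simp
        have hupd2 : (∑ i, Function.update j i₀ (j i₀ + 1) i • a i) = (∑ i, j i • a i) + a i₀ := by
          have hptw : ∀ i, Function.update j i₀ (j i₀ + 1) i • a i
              = j i • a i + (if i = i₀ then a i₀ else 0) := by
            intro i
            rcases eq_or_ne i i₀ with rfl | hne
            · simp [succ_nsmul]
            · simp [Function.update_apply, hne]
          simp only [hptw, Finset.sum_add_distrib, Finset.sum_ite_eq' Finset.univ i₀]
          simp
        rw [hupd, hupd2]
        rw [show k + 1 - ((∑ i, j i) + 1) = k - ∑ i, j i by omega]
        rw [show y + a i₀ - ((∑ i, j i • a i) + a i₀) = y - ∑ i, j i • a i by abel]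
        exact hmem
    · refine ⟨j, le_trans hjle (Nat.le_succ k), ?_⟩
      have hb' : b ∈ itSum (A \ Set.range a) 1 := by
        simpa [itSum_succ, itSum_zero, Set.singleton_add] using
          (⟨hb, hbr⟩ : b ∈ A \ Set.range a)
      have := add_mem_itSum hmem hb'
      rw [show k - (∑ i, j i) + 1 = (k+1) - ∑ i, j i by omega] at this
      rwa [show y + b - ∑ i, j i • a i = (y - ∑ i, j i • a i) + b by abel]

end UB

section UB2
variable {p : ℕ} [Fact p.Prime] {G : Type*} [AddCommGroup G] [Module (ZMod p) G] [Infinite G]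

lemma ub_key {A : Set G} {h n : ℕ} (h2 : 2 ≤ h) (hbasis : SimEq (itSum A h) Set.univ)
    {a : Fin n → G} (inj : Function.Injective a) (haA : ∀ i, a i ∈ A)
    (h0 : (0:G) ∈ A \ Set.range a)
    (hexc : ∀ i k, 1 ≤ k → ¬ SimEq (itSum (A \ {a i}) k) Set.univ) :
    n * (p - 1) ≤ h - 1 := by
  have hp : p.Prime := Fact.out
  have h0i : ∀ i, (0:G) ∈ A \ {a i} := by
    intro i
    refine ⟨h0.1, fun h0e => h0.2 ?_⟩
    rw [Set.mem_singleton_iff] at h0e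
    rw [h0e]
    exact Set.mem_range_self i
  have hspan : ∀ i, a i ∉ Submodule.span (ZMod p) (A \ {a i}) := fun i =>
    exceptional_not_mem_span (le_trans one_le_two h2) hbasis (h0i i) (hexc i)
  set H := Submodule.span (ZMod p) (A \ Set.range a) with hH
  have hind : ∀ c : Fin n → ZMod p, (∑ i, c i • a i) ∈ H → ∀ i, c i = 0 :=
    fun c hc => indep_of_not_mem_span inj hspan haA hc
  by_contra hcon
  have hge : h ≤ n * (p - 1) := by omega
  -- H is infinite
  have hHinf : (H : Set G).Infinite := by
    by_contra hfin
    rw [Set.not_infinite] at hfin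
    have hsub : itSum A h ⊆ ⋃ (j : Fin n → Fin (h+1)),
        ((∑ i, (j i : ℕ) • a i) + ·) '' (H : Set G) := by
      intro x hx
      obtain ⟨j, hjle, hmem⟩ := itSum_cover a h x hx
      have hji : ∀ i, j i < h + 1 := fun i => Nat.lt_succ_of_le (le_trans
        (Finset.single_le_sum (f := j) (fun _ _ => Nat.zero_le _) (Finset.mem_univ i)) hjle)
      refine Set.mem_iUnion.mpr ⟨fun i => ⟨j i, hji i⟩, ?_⟩
      refine ⟨x - ∑ i, j i • a i,
        itSum_subset_submodule H Submodule.subset_span _ hmem, ?_⟩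
      simp only [Fin.val_mk]
      abel
    have hfin2 : (itSum A h).Finite :=
      (Set.finite_iUnion (fun j => hfin.image _)).subset hsub
    have : (Set.univ : Set G).Finite := by
      simpa [Set.union_compl_self] using hfin2.union (simEq_univ_iff.mp hbasis)
    exact Set.infinite_univ (by simpa using this)
  -- the special coset v + H meets itSum A h only in {v}
  set v := ∑ i, (p-1) • a i with hv
  have hkey : ∀ x ∈ itSum A h, x - v ∈ (H:Set G) → x = v := by
    intro x hx hxv
    obtain ⟨j, hjle, hmem⟩ := itSum_cover a h x hx
    have hmemH : x - ∑ i, j i • a i ∈ (H : Set G) :=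
      itSum_subset_submodule H Submodule.subset_span _ hmem
    have hdiff : (∑ i, ((j i : ZMod p) - ((p-1 : ℕ) : ZMod p)) • a i) ∈ H := by
      have heq : (∑ i, ((j i : ZMod p) - ((p-1:ℕ) : ZMod p)) • a i)
          = (x - v) - (x - ∑ i, j i • a i) := by
        have hterm : ∀ i : Fin n, ((j i : ZMod p) - ((p-1:ℕ) : ZMod p)) • a i
            = j i • a i - (p-1) • a i := fun i => by
          rw [sub_smul, Nat.cast_smul_eq_nsmul, Nat.cast_smul_eq_nsmul]
        rw [hv]
        simp only [hterm, Finset.sum_sub_distrib]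
        abel
      rw [heq]
      exact Submodule.sub_mem _ hxv hmemH
    have hmod : ∀ i, (j i : ZMod p) = ((p-1:ℕ) : ZMod p) := by
      intro i
      have := hind _ hdiff i
      exact sub_eq_zero.mp this
    have hjge : ∀ i, p - 1 ≤ j i := by
      intro i
      have hmodeq : j i % p = (p-1) % p := (ZMod.natCast_eq_natCast_iff _ _ _).mp (hmod i)
      have hp1 : (p-1) % p = p - 1 := Nat.mod_eq_of_lt (by have := hp.pos; omega)
      have := Nat.mod_le (j i) p
      omega
    have hsum_ge : n * (p-1) ≤ ∑ i, j i := by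
      calc n * (p-1) = ∑ _i : Fin n, (p-1) := by simp [Finset.sum_const, mul_comm]
      _ ≤ ∑ i, j i := Finset.sum_le_sum (fun i _ => hjge i)
    have hsum_eq : (∑ i, j i) = h := le_antisymm hjle (le_trans hge hsum_ge)
    have hjeq : ∀ i, j i = p - 1 := by
      have hcon2 : (∑ _i : Fin n, (p-1)) = ∑ i, j i := by
        rw [hsum_eq]
        simp only [Finset.sum_const, Finset.card_univ, Fintype.card_fin, smul_eq_mul]
        omega
      have := (Finset.sum_eq_sum_iff_of_le (fun i _ => hjge i)).mp hcon2
      intro i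
      exact ((this i (Finset.mem_univ i))).symm
    have : x - ∑ i, j i • a i ∈ itSum (A \ Set.range a) 0 := by
      rwa [hsum_eq, Nat.sub_self] at hmem
    rw [itSum_zero, Set.mem_singleton_iff, sub_eq_zero] at this
    rw [this, hv]
    congr 1; ext i; rw [hjeq i]
  -- contradiction : the coset v + H is infinite but contained in {v} ∪ (itSum A h)ᶜ
  have hC : ((v + ·) '' (H:Set G)).Infinite :=
    hHinf.image (Set.injOn_of_injective (add_right_injective v))
  have hsplit : ((v + ·) '' (H:Set G)) ⊆ {v} ∪ (itSum A h)ᶜ := by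
    rintro z ⟨y, hy, rfl⟩
    by_cases hz : (v + y) ∈ itSum A h
    · left
      have hyH : (v + y) - v ∈ (H : Set G) := by simpa using hy
      simp [hkey _ hz hyH]
    · right; exact hz
  exact hC (((Set.finite_singleton v).union (simEq_univ_iff.mp hbasis)).subset hsplit)

end UB2

section Wrapper
variable {p : ℕ} [Fact p.Prime] {G : Type*} [AddCommGroup G] [Module (ZMod p) G] [Infinite G]

lemma ub_translated {A : Set G} {h n : ℕ} (h2 : 2 ≤ h) (hbasis : SimEq (itSum A h) Set.univ)
    {a : Fin n → G} (inj : Function.Injective a) (haA : ∀ i, a i ∈ A)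
    (hexc : ∀ i k, 1 ≤ k → ¬ SimEq (itSum (A \ {a i}) k) Set.univ) :
    n ≤ (h - 1) / (p - 1) := by
  have hp : p.Prime := Fact.out
  have hAinf : A.Infinite := basis_infinite hbasis
  obtain ⟨b₀, hb₀⟩ : (A \ Set.range a).Nonempty :=
    (hAinf.diff (Set.finite_range a)).nonempty
  set B : Set G := {-b₀} + A with hB
  set a' : Fin n → G := fun i => -b₀ + a i with ha'
  have inj' : Function.Injective a' := fun i j hij => inj (add_left_cancel hij)
  have haB : ∀ i, a' i ∈ B := fun i => ⟨-b₀, rfl, a i, haA i, rfl⟩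
  have hbasisB : SimEq (itSum B h) Set.univ := by
    rw [hB, itSum_singleton_add, simEq_singleton_add_univ_iff]
    exact hbasis
  have h0B : (0:G) ∈ B \ Set.range a' := by
    constructor
    · exact ⟨-b₀, rfl, b₀, hb₀.1, by abel⟩
    · rintro ⟨i, hi⟩
      rw [ha'] at hi
      exact hb₀.2 ⟨i, (neg_add_eq_zero.mp hi).symm⟩
  have hexcB : ∀ i k, 1 ≤ k → ¬ SimEq (itSum (B \ {a' i}) k) Set.univ := by
    intro i k hk
    have hBdiff : B \ {a' i} = {-b₀} + (A \ {a i}) := by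
      rw [singleton_add_diff]
    rw [hBdiff, itSum_singleton_add, simEq_singleton_add_univ_iff]
    exact hexc i k hk
  have := ub_key (p := p) h2 hbasisB inj' haB h0B hexcB
  rw [Nat.le_div_iff_mul_le (by have := hp.two_le; omega)]
  exact this

lemma ub_ncard {A : Set G} {h : ℕ} (h2 : 2 ≤ h) (hbasis : SimEq (itSum A h) Set.univ) :
    {a ∈ A | ¬ ∃ k, 1 ≤ k ∧ SimEq (itSum (A \ {a}) k) Set.univ}.ncard ≤ (h - 1) / (p - 1) := by
  set Exc := {a ∈ A | ¬ ∃ k, 1 ≤ k ∧ SimEq (itSum (A \ {a}) k) Set.univ} with hExc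
  by_cases hfin : Exc.Finite
  · obtain ⟨m, f, hf⟩ := hfin.fin_embedding
    have hm : Exc.ncard = m := by
      rw [← hf, ← Set.image_univ, Set.ncard_image_of_injective _ f.injective,
        Set.ncard_univ, Nat.card_eq_fintype_card, Fintype.card_fin]
    rw [hm]
    refine ub_translated (p := p) h2 hbasis f.injective (fun i => ?_) (fun i k hk hsim => ?_)
    · have : f i ∈ Exc := hf ▸ Set.mem_range_self i
      exact this.1
    · have : f i ∈ Exc := hf ▸ Set.mem_range_self i
      exact this.2 ⟨k, hk, hsim⟩
  · rw [Set.Infinite.ncard hfin]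
    exact Nat.zero_le _

end Wrapper

section Construction
open Polynomial
variable (p : ℕ) [Fact p.Prime] (s : ℕ)

private def Wset : Set (Polynomial (ZMod p)) := {f | ∀ i < s, f.coeff i = 0}
private def Eset : Set (Polynomial (ZMod p)) := (fun i => (X : Polynomial (ZMod p))^i) '' Set.Iio s
private def Aset : Set (Polynomial (ZMod p)) := Wset p s ∪ Eset p s

variable {p s}

lemma zero_mem_W : (0 : Polynomial (ZMod p)) ∈ Wset p s := fun i _ => by simp

lemma sub_mem_W {x y : Polynomial (ZMod p)} (hx : x ∈ Wset p s) (hy : y ∈ Wset p s) :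
    x - y ∈ Wset p s := fun i hi => by
  simp [Polynomial.coeff_sub, hx i hi, hy i hi]

lemma X_pow_mem_W {n : ℕ} (hn : s ≤ n) : (X : Polynomial (ZMod p))^n ∈ Wset p s := by
  intro j hj
  rw [coeff_X_pow]
  simp [show j ≠ n by omega]

lemma X_pow_not_mem_W {i : ℕ} (hi : i < s) : (X : Polynomial (ZMod p))^i ∉ Wset p s := by
  intro hmem
  have := hmem i hi
  rw [coeff_X_pow] at this
  simp at this

lemma X_pow_injective : Function.Injective (fun n : ℕ => (X : Polynomial (ZMod p))^n) := by
  intro n m hnm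
  have := congrArg natDegree hnm
  simpa [natDegree_X_pow] using this

lemma W_infinite : (Wset p s).Infinite :=
  Set.infinite_of_injective_forall_mem
    (f := fun n : ℕ => (X : Polynomial (ZMod p))^(s + n))
    (fun n m hnm => by simpa using X_pow_injective hnm)
    (fun n => X_pow_mem_W (Nat.le_add_right s n))

/-- the decomposition of an arbitrary polynomial -/
lemma decomp (x : Polynomial (ZMod p)) :
    x - (∑ i ∈ Finset.range s, x.coeff i • (X : Polynomial (ZMod p))^i) ∈ Wset p s := by
  intro j hj
  rw [Polynomial.coeff_sub, Polynomial.finset_sum_coeff]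
  have : ∀ i ∈ Finset.range s, (x.coeff i • (X : Polynomial (ZMod p))^i).coeff j
      = if i = j then x.coeff j else 0 := by
    intro i _
    rw [Polynomial.coeff_smul, coeff_X_pow]
    rcases eq_or_ne i j with rfl | hne
    · simp
    · simp [show j ≠ i from hne.symm, hne]
  rw [Finset.sum_congr rfl this, Finset.sum_ite_eq' (Finset.range s) j]
  simp [Finset.mem_range.mpr hj]

lemma nsmul_cast_smul (c : ZMod p) (g : Polynomial (ZMod p)) :
    c.val • g = c • g := by
  haveI : NeZero p := ⟨(Fact.out (p := p.Prime)).ne_zero⟩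
  rw [← Nat.cast_smul_eq_nsmul (ZMod p), ZMod.natCast_val, ZMod.cast_id]

lemma sum_val_le (x : Polynomial (ZMod p)) :
    (∑ i ∈ Finset.range s, (x.coeff i).val) ≤ s * (p - 1) := by
  haveI : NeZero p := ⟨(Fact.out (p := p.Prime)).ne_zero⟩
  calc (∑ i ∈ Finset.range s, (x.coeff i).val) ≤ ∑ _i ∈ Finset.range s, (p - 1) :=
        Finset.sum_le_sum (fun i _ => by have := ZMod.val_lt (x.coeff i); omega)
    _ = s * (p - 1) := by simp [mul_comm]

lemma g_part_mem {B : Set (Polynomial (ZMod p))} (hB : ∀ i < s, (X : Polynomial (ZMod p))^i ∈ B)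
    (x : Polynomial (ZMod p)) :
    (∑ i ∈ Finset.range s, x.coeff i • (X : Polynomial (ZMod p))^i)
      ∈ itSum B (∑ i ∈ Finset.range s, (x.coeff i).val) := by
  have := sum_mem_itSum (A := B) (Finset.range s)
    (fun i => x.coeff i • (X : Polynomial (ZMod p))^i) (fun i => (x.coeff i).val)
    (fun i hi => by
      show x.coeff i • (X : Polynomial (ZMod p))^i ∈ _
      rw [← nsmul_cast_smul]
      exact nsmul_mem_itSum (hB i (Finset.mem_range.mp hi)) _)
  exact this
end Construction

section Construction2
open Polynomial
variable {p : ℕ} [Fact p.Prime] {s h : ℕ}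

lemma Aset_basis (hs : s * (p - 1) + 1 ≤ h) :
    SimEq (itSum (Aset p s) h) Set.univ := by
  rw [simEq_univ_iff]
  have huniv : ∀ x : Polynomial (ZMod p), x ∈ itSum (Aset p s) h := by
    intro x
    set g := ∑ i ∈ Finset.range s, x.coeff i • (X : Polynomial (ZMod p))^i with hg
    have hgmem : g ∈ itSum (Aset p s) (∑ i ∈ Finset.range s, (x.coeff i).val) :=
      g_part_mem (fun i hi => Or.inr ⟨i, hi, rfl⟩) x
    have hwmem : x - g ∈ itSum (Aset p s) 1 := by
      have : x - g ∈ Aset p s := Or.inl (decomp x)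
      simpa [itSum_succ, itSum_zero, Set.singleton_add] using this
    have := add_mem_itSum hgmem hwmem
    rw [show g + (x - g) = x by abel] at this
    refine itSum_le_of_zero_mem (show (0 : Polynomial (ZMod p)) ∈ Aset p s from Or.inl zero_mem_W) ?_ this
    have := sum_val_le (s := s) x
    omega
  rw [Set.eq_univ_of_forall huniv, Set.compl_univ]
  exact Set.finite_empty

lemma Eset_exceptional {i : ℕ} (hi : i < s) (k : ℕ) :
    ¬ SimEq (itSum (Aset p s \ {(X : Polynomial (ZMod p))^i}) k) Set.univ := by
  intro hsim
  set Hi := LinearMap.ker (Polynomial.lcoeff (ZMod p) i) with hHi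
  have hsub : Aset p s \ {(X : Polynomial (ZMod p))^i} ⊆ (Hi : Set (Polynomial (ZMod p))) := by
    rintro f ⟨hfA, hfne⟩
    rcases hfA with hfW | ⟨j, hj, rfl⟩
    · exact hfW i hi
    · have hji : j ≠ i := fun hji => hfne (by rw [hji]; exact rfl)
      show ((X : Polynomial (ZMod p))^j).coeff i = 0
      rw [coeff_X_pow]
      exact if_neg (fun hij => hji hij.symm)
  have hHc : ((Hi : Set (Polynomial (ZMod p)))ᶜ).Infinite := by
    apply Set.infinite_of_injective_forall_mem
      (f := fun n : ℕ => (X : Polynomial (ZMod p))^i + (X : Polynomial (ZMod p))^(s + n))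
    · intro n m hnm
      simpa using X_pow_injective (add_left_cancel hnm)
    · intro n
      show ¬ ((X : Polynomial (ZMod p))^i + (X : Polynomial (ZMod p))^(s+n)).coeff i = 0
      rw [Polynomial.coeff_add, coeff_X_pow, coeff_X_pow]
      simp [show i ≠ s + n by omega]
  have hcompl : (Hi : Set (Polynomial (ZMod p)))ᶜ ⊆ (itSum (Aset p s \ {(X : Polynomial (ZMod p))^i}) k)ᶜ :=
    Set.compl_subset_compl.mpr (itSum_subset_submodule Hi hsub k)
  exact (hHc.mono hcompl) (simEq_univ_iff.mp hsim)

lemma Wsum_mem {w : Polynomial (ZMod p)} :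
    ∀ m, 2 ≤ m → ∀ z ∈ Wset p s, z ∈ itSum (Wset p s \ {w}) m := by
  intro m
  induction m with
  | zero => omega
  | succ m ih =>
    intro hm z hz
    rcases Nat.lt_or_ge m 2 with hm2 | hm2
    · -- m + 1 = 2, i.e. m = 1
      have hm1 : m = 1 := by omega
      subst hm1
      obtain ⟨u, huW, hune⟩ : ((Wset p s) \ {w, z - w}).Nonempty :=
        (W_infinite.diff (Set.toFinite _)).nonempty
      have hu1 : u ∈ itSum (Wset p s \ {w}) 1 := by
        have : u ∈ Wset p s \ {w} := ⟨huW, fun hc => hune (by simp_all)⟩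
        simpa [itSum_succ, itSum_zero, Set.singleton_add] using this
      have hu2 : z - u ∈ itSum (Wset p s \ {w}) 1 := by
        have hzu : z - u ∈ Wset p s := sub_mem_W hz huW
        have hne : z - u ≠ w := by
          intro hc
          exact hune (by simp [show u = z - w by rw [← hc]; abel])
        have : z - u ∈ Wset p s \ {w} := ⟨hzu, hne⟩
        simpa [itSum_succ, itSum_zero, Set.singleton_add] using this
      have := add_mem_itSum hu1 hu2
      rwa [show u + (z - u) = z by abel] at this
    · obtain ⟨u, huW, hune⟩ : ((Wset p s) \ {w}).Nonempty :=
        (W_infinite.diff (Set.toFinite _)).nonempty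
      have hu1 : u ∈ itSum (Wset p s \ {w}) 1 := by
        have : u ∈ Wset p s \ {w} := ⟨huW, hune⟩
        simpa [itSum_succ, itSum_zero, Set.singleton_add] using this
      have hzu : z - u ∈ itSum (Wset p s \ {w}) m := ih hm2 _ (sub_mem_W hz huW)
      have := add_mem_itSum hzu hu1
      rwa [show z - u + u = z by abel] at this

lemma W_not_exceptional {w : Polynomial (ZMod p)} (hw : w ∈ Wset p s)
    (h2 : 2 ≤ h) (hs : s * (p - 1) ≤ h - 1) :
    SimEq (itSum (Aset p s \ {w}) h) Set.univ := by
  rw [simEq_univ_iff]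
  set Fbad : Set (Polynomial (ZMod p)) :=
    (· + w) '' Set.range (fun c : Fin s → ZMod p => ∑ i, c i • (X : Polynomial (ZMod p))^(i:ℕ))
    with hFbad
  have hFfin : Fbad.Finite := (Set.finite_range _).image _
  refine hFfin.subset ?_
  intro x hx
  rw [Set.mem_compl_iff] at hx
  by_contra hxF
  apply hx
  -- show x ∈ itSum (Aset p s \ {w}) h
  set g := ∑ i ∈ Finset.range s, x.coeff i • (X : Polynomial (ZMod p))^i with hg
  set S := ∑ i ∈ Finset.range s, (x.coeff i).val with hS
  have hX : ∀ i < s, (X : Polynomial (ZMod p))^i ∈ Aset p s \ {w} := by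
    intro i hi
    exact ⟨Or.inr ⟨i, hi, rfl⟩, fun hc => X_pow_not_mem_W hi (by rw [Set.mem_singleton_iff] at hc; rw [hc]; exact hw)⟩
  have hgmem : g ∈ itSum (Aset p s \ {w}) S := g_part_mem hX x
  have hSle : S ≤ s * (p - 1) := sum_val_le x
  have hwd : x - g ∈ Wset p s := decomp x
  rcases Nat.lt_or_ge (S + 1) h with hcase | hcase
  · -- at least 2 left over
    have hwsum : x - g ∈ itSum (Wset p s \ {w}) (h - S) := Wsum_mem (h - S) (by omega) _ hwd
    have hwsum' : x - g ∈ itSum (Aset p s \ {w}) (h - S) :=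
      itSum_mono (Set.diff_subset_diff_left Set.subset_union_left) _ hwsum
    have := add_mem_itSum hgmem hwsum'
    rwa [show g + (x - g) = x by abel, show S + (h - S) = h by omega] at this
  · -- S = h - 1
    have hSeq : S = h - 1 := by omega
    by_cases hww : x - g = w
    · -- x ∈ Fbad, contradiction
      exfalso
      apply hxF
      refine ⟨g, ⟨fun i : Fin s => x.coeff i, ?_⟩, ?_⟩
      · show (∑ i : Fin s, x.coeff (i:ℕ) • (X : Polynomial (ZMod p))^(i:ℕ)) = g
        rw [hg]
        exact Fin.sum_univ_eq_sum_range (fun i => x.coeff i • (X : Polynomial (ZMod p))^i) s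
      · show g + w = x
        rw [← hww]; abel
    · have hwsum : x - g ∈ itSum (Aset p s \ {w}) 1 := by
        have : x - g ∈ Aset p s \ {w} := ⟨Or.inl hwd, hww⟩
        simpa [itSum_succ, itSum_zero, Set.singleton_add] using this
      have := add_mem_itSum hgmem hwsum
      rwa [show g + (x - g) = x by abel, show S + 1 = h by omega] at this

end Construction2

section Final
open Polynomial

lemma exc_set_eq {p : ℕ} [Fact p.Prime] {s h : ℕ} (h2 : 2 ≤ h)
    (hs1 : s * (p - 1) ≤ h - 1) :
    {a ∈ Aset p s | ¬ ∃ k, 1 ≤ k ∧ SimEq (itSum (Aset p s \ {a}) k) Set.univ} = Eset p s := by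
  ext a
  constructor
  · rintro ⟨haA, hexc⟩
    rcases haA with haW | haE
    · exact absurd ⟨h, by omega, W_not_exceptional haW h2 hs1⟩ hexc
    · exact haE
  · rintro ⟨i, hi, rfl⟩
    refine ⟨Or.inr ⟨i, hi, rfl⟩, ?_⟩
    rintro ⟨k, _, hsim⟩
    exact Eset_exceptional hi k hsim

lemma Eset_ncard {p : ℕ} [Fact p.Prime] (s : ℕ) : (Eset p s).ncard = s := by
  rw [Eset, Set.ncard_image_of_injective _ X_pow_injective, ← Finset.coe_range,
    Set.ncard_coe_finset, Finset.card_range]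

theorem stmt_10 (p : ℕ) [Fact p.Prime] (h : ℕ) (hh : 2 ≤ h) :
    IsGreatest {n : ℕ | ∃ A : Set (Polynomial (ZMod p)),
        SimEq (itSum A h) Set.univ ∧
        n = {a ∈ A | ¬ ∃ k, 1 ≤ k ∧ SimEq (itSum (A \ {a}) k) Set.univ}.ncard}
      ((h - 1) / (p - 1)) := by
  constructor
  · -- membership
    set s := (h - 1) / (p - 1) with hsdef
    have hs1 : s * (p - 1) ≤ h - 1 := Nat.div_mul_le_self (h - 1) (p - 1)
    refine ⟨Aset p s, Aset_basis (by omega), ?_⟩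
    rw [exc_set_eq hh hs1, Eset_ncard]
  · rintro n ⟨A, hbasis, rfl⟩
    exact ub_ncard hh hbasis

end Final
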